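/- Every boundary action groupoid is Hausdorff (its space of morphisms is a Hausdorff topological space). -/

import Mathlib

/-!
We model a (locally compact / Lie) groupoid `𝒢 ⇉ U` over a set of units
`U ⊆ X` by a type `A` of arrows together with (total) structural maps;
multiplication is a total function whose value is only relevant on composable
pairs.  Smoothness is modelled at the topological level.
-/

universe u v

/-- An (algebraic) groupoid with arrow space `A` over the set of units `U ⊆ X`. -/
structure GroupoidOn (X : Type u) (A : Type v) (U : Set X) where
  d : A → X
  r : A → X
  unit : U → A
  inv : A → A
  mul : A → A → A
  d_mem : ∀ g, d g ∈ U
  r_mem : ∀ g, r g ∈ U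
  d_unit : ∀ x : U, d (unit x) = x
  r_unit : ∀ x : U, r (unit x) = x
  d_inv : ∀ g, d (inv g) = r g
  r_inv : ∀ g, r (inv g) = d g
  d_mul : ∀ g h, d g = r h → d (mul g h) = d h
  r_mul : ∀ g h, d g = r h → r (mul g h) = r g
  mul_assoc' : ∀ g h k, d g = r h → d h = r k → mul (mul g h) k = mul g (mul h k)
  unit_mul : ∀ g, mul (unit ⟨r g, r_mem g⟩) g = g
  mul_unit : ∀ g, mul g (unit ⟨d g, d_mem g⟩) = g
  mul_inv : ∀ g, mul g (inv g) = unit ⟨r g, r_mem g⟩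
  inv_mul : ∀ g, mul (inv g) g = unit ⟨d g, d_mem g⟩

namespace GroupoidOn

variable {X : Type u} {A : Type v} {U : Set X}

/-- The reduction set `𝒢|_V = d⁻¹(V) ∩ r⁻¹(V)` of a groupoid to `V ⊆ X`. -/
def res (G : GroupoidOn X A U) (V : Set X) : Set A :=
  {g | G.d g ∈ V ∧ G.r g ∈ V}

end GroupoidOn

/-- `G` is a topological groupoid: continuous structural maps, `d` surjective
(onto the units) and open. Together with local compactness of the arrow and unit
spaces this is the notion of a locally compact groupoid. -/
structure IsTopGroupoid {X : Type u} {A : Type v} {U : Set X}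
    [TopologicalSpace X] [TopologicalSpace A] (G : GroupoidOn X A U) : Prop where
  continuous_d : Continuous G.d
  continuous_r : Continuous G.r
  continuous_unit : Continuous G.unit
  continuous_inv : Continuous G.inv
  continuousOn_mul : ContinuousOn (fun p : A × A => G.mul p.1 p.2)
    {p : A × A | G.d p.1 = G.r p.2}
  d_surj : U ⊆ Set.range G.d
  isOpenMap_d : IsOpenMap G.d

namespace GroupoidOn

variable {X : Type u} {A : Type v} {U : Set X}

/-- A subset `S` of the units is invariant if the range of any arrow whose
domain lies in `S` also lies in `S`. -/
def IsInvariant (G : GroupoidOn X A U) (S : Set X) : Prop :=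
  ∀ g, G.d g ∈ S → G.r g ∈ S

end GroupoidOn

/-- The pair groupoid of a subset `S ⊆ X`. -/
def pairGroupoid {X : Type u} (S : Set X) : GroupoidOn X (S × S) S where
  d p := p.2
  r p := p.1
  unit x := (x, x)
  inv p := (p.2, p.1)
  mul p q := (p.1, q.2)
  d_mem p := p.2.2
  r_mem p := p.1.2
  d_unit _ := rfl
  r_unit _ := rfl
  d_inv _ := rfl
  r_inv _ := rfl
  d_mul _ _ _ := rfl
  r_mul _ _ _ := rfl
  mul_assoc' _ _ _ _ _ := rfl
  unit_mul g := by ext <;> rfl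
  mul_unit g := by ext <;> rfl
  mul_inv g := by ext <;> rfl
  inv_mul g := by ext <;> rfl

/-- A continuous right action of a (topological) group `Γ` on a space `Y`.
(In our applications this models a *smooth* action of a Lie group on a
manifold; smoothness is modelled at the topological level.) -/
structure ContRightAction (Γ : Type*) (Y : Type*) [Group Γ] [TopologicalSpace Γ]
    [TopologicalSpace Y] where
  act : Y → Γ → Y
  act_one : ∀ y, act y 1 = y
  act_mul : ∀ y g h, act y (g * h) = act (act y g) h
  continuous_act : Continuous fun p : Y × Γ => act p.1 p.2

/-- The action groupoid `Y ⋊ Γ` of a continuous right action: arrows `Y × Γ`,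
`r (y, g) = y`, `d (y, g) = y · g⁻¹`, and `(y, h)(y·h⁻¹, g) = (y, gh)`. -/
def actionGroupoid {Γ : Type*} {Y : Type*} [Group Γ] [TopologicalSpace Γ]
    [TopologicalSpace Y] (ρ : ContRightAction Γ Y) :
    GroupoidOn Y (Y × Γ) Set.univ where
  d p := ρ.act p.1 p.2⁻¹
  r p := p.1
  unit y := (y.1, 1)
  inv p := (ρ.act p.1 p.2⁻¹, p.2⁻¹)
  mul p q := (p.1, q.2 * p.2)
  d_mem _ := trivial
  r_mem _ := trivial
  d_unit y := by simp [ρ.act_one]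
  r_unit y := rfl
  d_inv p := by
    show ρ.act (ρ.act p.1 p.2⁻¹) (p.2⁻¹)⁻¹ = p.1
    rw [← ρ.act_mul]; simp [ρ.act_one]
  r_inv p := rfl
  d_mul p q h := by
    show ρ.act p.1 (q.2 * p.2)⁻¹ = ρ.act q.1 q.2⁻¹
    rw [mul_inv_rev, ρ.act_mul]
    exact congrArg (fun z => ρ.act z q.2⁻¹) h
  r_mul _ _ _ := rfl
  mul_assoc' p q k _ _ := by simp [mul_assoc]
  unit_mul g := by simp
  mul_unit g := by simp
  mul_inv g := by simp
  inv_mul g := by simp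

/-- `AreRedIso G V H W` : the reductions `G|_V` and `H|_W` are isomorphic as
topological groupoids, via a homeomorphism of the unit sets `V ≃ₜ W` and a
compatible homeomorphism of the arrow spaces preserving domain, range and
multiplication. -/
def AreRedIso {X : Type*} [TopologicalSpace X] {A : Type*} [TopologicalSpace A]
    {S : Set X} (G : GroupoidOn X A S) (V : Set X)
    {Y : Type*} [TopologicalSpace Y] {B : Type*} [TopologicalSpace B]
    {T : Set Y} (H : GroupoidOn Y B T) (W : Set Y) : Prop :=
  ∃ (base : V ≃ₜ W) (e : {g : A // g ∈ G.res V} ≃ₜ {b : B // b ∈ H.res W}),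
    (∀ g : {g : A // g ∈ G.res V}, H.d (e g).1 = (base ⟨G.d g.1, g.2.1⟩ : Y)) ∧
    (∀ g : {g : A // g ∈ G.res V}, H.r (e g).1 = (base ⟨G.r g.1, g.2.2⟩ : Y)) ∧
    (∀ (g h : {g : A // g ∈ G.res V}) (hc : G.d g.1 = G.r h.1),
      (e ⟨G.mul g.1 h.1,
          ⟨by rw [G.d_mul _ _ hc]; exact h.2.1,
           by rw [G.r_mul _ _ hc]; exact g.2.2⟩⟩).1 = H.mul (e g).1 (e h).1)

/-- `OrbitData G U` : `U` is an open dense invariant subset of the unit set `S`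
of `G` on which `G` is the pair groupoid (`𝒢_U ≅ U × U`); such a `U` is the
(unique) open dense orbit of a boundary action groupoid. -/
def OrbitData {X : Type u} [TopologicalSpace X] {A : Type v} [TopologicalSpace A]
    {S : Set X} (G : GroupoidOn X A S) (U : Set X) : Prop :=
  U ⊆ S ∧ IsOpen U ∧ S ⊆ closure U ∧ G.IsInvariant U ∧
    AreRedIso G U (pairGroupoid U) U

/-- `𝒢 ⇉ S` is a **boundary action groupoid**: a (Lie) groupoid, with an open
dense invariant subset `U` of the units on which it is the pair groupoid,
covered by reductions of action groupoids of (Lie) group actions, the family of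
these reductions satisfying the weak gluing condition.  (Smoothness is modelled
at the topological level.) -/
structure IsBoundaryActionGroupoid {X : Type u} [TopologicalSpace X] {A : Type u}
    [TopologicalSpace A] {S : Set X} (G : GroupoidOn X A S) : Prop where
  top : IsTopGroupoid G
  -- (1) an open dense invariant subset `U ⊆ S` with `𝒢_U ≅ U × U`:
  orbit : ∃ U : Set X, OrbitData G U
  -- (2) + (3) an open cover of the unit space by sets over which `𝒢` is a
  -- reduction of an action groupoid, satisfying the weak gluing condition:
  cover : ∃ (ι : Type u) (V : ι → Set X),
    (∀ i, IsOpen (V i)) ∧ (∀ x ∈ S, ∃ i, x ∈ V i) ∧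
    (∀ i, ∃ (Y : Type u) (tY : TopologicalSpace Y) (Γ : Type u) (gΓ : Group Γ)
      (tΓ : TopologicalSpace Γ) (_ : @IsTopologicalGroup Γ tΓ gΓ)
      (ρ : @ContRightAction Γ Y gΓ tΓ tY) (W : Set Y),
      @IsOpen Y tY W ∧
      @AreRedIso X _ A _ S G (V i) Y tY (Y × Γ) (@instTopologicalSpaceProd Y Γ tY tΓ)
        Set.univ (@actionGroupoid Γ Y gΓ tΓ tY ρ) W) ∧
    (∀ g h : A, G.d g = G.r h → ∃ i, g ∈ G.res (V i) ∧ h ∈ G.res (V i))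

/-- Every boundary action groupoid is Hausdorff: its space of
morphisms is a Hausdorff topological space. -/
theorem statement_7 {X : Type u} [TopologicalSpace X] [T2Space X]
    [LocallyCompactSpace X] {A : Type u} [TopologicalSpace A]
    (G : GroupoidOn X A Set.univ) (hG : IsBoundaryActionGroupoid G) :
    T2Space A := by
  obtain ⟨U, hUS, hUopen, hUdense, hUinv, hUiso⟩ := hG.orbit
  obtain ⟨ι, V, hVopen, -, hVcharts, hglue⟩ := hG.cover
  have htop := hG.top
  -- the open dense set of arrows `Ω = G.res U` on which arrows are determined by `(d, r)`
  set Ω := G.res U with hΩdef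
  have hΩopen : IsOpen Ω :=
    (hUopen.preimage htop.continuous_d).inter (hUopen.preimage htop.continuous_r)
  have hΩdense : Dense Ω := by
    intro a
    rw [mem_closure_iff]
    intro O hO haO
    have hdU : Dense U := fun x => hUdense (Set.mem_univ x)
    obtain ⟨x, hx1, hx2⟩ :=
      hdU.inter_open_nonempty (G.d '' O) (htop.isOpenMap_d O hO) ⟨_, a, haO, rfl⟩
    obtain ⟨b, hbO, rfl⟩ := hx1
    exact ⟨b, hbO, hx2, hUinv b hx2⟩
  -- injectivity of `(d, r)` on `Ω` (from the pair-groupoid isomorphism)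
  have hinj : ∀ a, ∀ ha : a ∈ Ω, ∀ b, ∀ hb : b ∈ Ω,
      G.d a = G.d b → G.r a = G.r b → a = b := by
    obtain ⟨base₀, e₀, hd₀, hr₀, -⟩ := hUiso
    intro a ha b hb hd hr
    have h1 : ((e₀ ⟨a, ha⟩).1.2 : X) = ((e₀ ⟨b, hb⟩).1.2 : X) :=
      (hd₀ ⟨a, ha⟩).trans <|
        (congrArg (fun t : U => (base₀ t : X)) (Subtype.ext hd)).trans (hd₀ ⟨b, hb⟩).symm
    have h2 : ((e₀ ⟨a, ha⟩).1.1 : X) = ((e₀ ⟨b, hb⟩).1.1 : X) :=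
      (hr₀ ⟨a, ha⟩).trans <|
        (congrArg (fun t : U => (base₀ t : X)) (Subtype.ext hr)).trans (hr₀ ⟨b, hb⟩).symm
    have : e₀ ⟨a, ha⟩ = e₀ ⟨b, hb⟩ :=
      Subtype.ext (Prod.ext (Subtype.ext h2) (Subtype.ext h1))
    have := e₀.toEquiv.injective this
    exact congrArg Subtype.val this
  constructor
  intro g h hne
  by_cases hdd : G.d g = G.d h
  swap
  · obtain ⟨u, v, hu, hv, hgu, hhv, huv⟩ := t2_separation hdd
    exact ⟨G.d ⁻¹' u, G.d ⁻¹' v, hu.preimage htop.continuous_d, hv.preimage htop.continuous_d,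
      hgu, hhv, huv.preimage _⟩
  by_cases hrr : G.r g = G.r h
  swap
  · obtain ⟨u, v, hu, hv, hgu, hhv, huv⟩ := t2_separation hrr
    exact ⟨G.r ⁻¹' u, G.r ⁻¹' v, hu.preimage htop.continuous_r, hv.preimage htop.continuous_r,
      hgu, hhv, huv.preimage _⟩
  -- main case: `d g = d h`, `r g = r h`, `g ≠ h`
  have hcomp : G.d g = G.r (G.inv h) := by rw [G.r_inv]; exact hdd
  obtain ⟨i, hgV, hinvhV⟩ := hglue g (G.inv h) hcomp
  have hhV : h ∈ G.res (V i) := ⟨G.r_inv h ▸ hinvhV.2, G.d_inv h ▸ hinvhV.1⟩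
  have hVopen' : IsOpen (G.res (V i)) :=
    ((hVopen i).preimage htop.continuous_d).inter ((hVopen i).preimage htop.continuous_r)
  obtain ⟨Y, tY, Γ, gΓ, tΓ, tgΓ, ρ, W, hWopen, hiso⟩ := hVcharts i
  letI := tY; letI := gΓ; letI := tΓ; haveI := tgΓ
  obtain ⟨base, e, hd, hr, -⟩ := hiso
  set g' : {x // x ∈ G.res (V i)} := ⟨g, hgV⟩ with hg'def
  set h' : {x // x ∈ G.res (V i)} := ⟨h, hhV⟩ with hh'def
  set p : Y × Γ := (e g').1 with hpdef
  set q : Y × Γ := (e h').1 with hqdef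
  have hp1q1 : p.1 = q.1 := by
    have h1 : p.1 = (base ⟨G.r g, hgV.2⟩ : Y) := hr g'
    have h2 : q.1 = (base ⟨G.r h, hhV.2⟩ : Y) := hr h'
    rw [h1, h2]
    congr 2
    exact Subtype.ext hrr
  have hp2q2 : p.2 ≠ q.2 := by
    intro heq
    apply hne
    have : p = q := Prod.ext hp1q1 heq
    have := e.toEquiv.injective (Subtype.ext this)
    exact congrArg Subtype.val this
  -- key claim: `p.2` and `q.2` are separable in `Γ`
  have hkey : ¬ Inseparable p.2 q.2 := by
    intro hins
    set σ : Γ := p.2⁻¹ * q.2 with hσdef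
    have hσ : Inseparable (1 : Γ) σ := by
      have := hins.map (f := fun t => p.2⁻¹ * t) (continuous_const.mul continuous_id)
      simpa using this
    -- pick an arrow `a ∈ Ω ∩ G.res (V i)`
    obtain ⟨a, haV, haΩ⟩ := hΩdense.inter_open_nonempty (G.res (V i)) hVopen' ⟨g, hgV⟩
    set a' : {x // x ∈ G.res (V i)} := ⟨a, haV⟩ with ha'def
    set P := e a' with hPdef
    set z : Y := P.1.1 with hzdef
    set β : Γ := P.1.2 with hβdef
    have hq₀W : ((z, β * σ) : Y × Γ) ∈ (actionGroupoid ρ).res W := by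
      have hPW := P.2
      constructor
      · -- `d (z, β * σ) ∈ W`
        show ρ.act z (β * σ)⁻¹ ∈ W
        have h1 : Inseparable (β⁻¹) ((β * σ)⁻¹) := by
          have := hσ.map (f := fun t => (β * t)⁻¹) ((continuous_const.mul continuous_id).inv)
          simpa using this
        have h2 : Inseparable (ρ.act z β⁻¹) (ρ.act z (β * σ)⁻¹) := by
          have := h1.map (f := fun t => ρ.act z t)
            (ρ.continuous_act.comp (continuous_const.prodMk continuous_id))
          simpa using this
        have hdP : ρ.act z β⁻¹ ∈ W := hPW.1
        exact (h2.mem_open_iff hWopen).1 hdP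
      · -- `r (z, β * σ) ∈ W`
        show z ∈ W
        exact hPW.2
    set Q : {b // b ∈ (actionGroupoid ρ).res W} := ⟨(z, β * σ), hq₀W⟩ with hQdef
    have hPQval : Inseparable (P.1 : Y × Γ) (Q.1 : Y × Γ) := by
      have hβins : Inseparable β (β * σ) := by
        have := hσ.map (f := fun t => β * t) (continuous_const.mul continuous_id)
        simpa using this
      exact (Inseparable.refl z).prod hβins
    have hPQ : Inseparable P Q := Topology.IsInducing.subtypeVal.inseparable_iff.1 hPQval
    set b : A := (e.symm Q).1 with hbdef
    have hab : Inseparable a b := by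
      have h1 : Inseparable (e.symm P) (e.symm Q) := hPQ.map e.symm.continuous
      have h2 : Inseparable (e.symm P).1 (e.symm Q).1 := h1.map continuous_subtype_val
      have h3 : e.symm P = a' := by rw [hPdef]; exact e.symm_apply_apply a'
      rw [h3] at h2
      exact h2
    have hbΩ : b ∈ Ω := (hab.mem_open_iff hΩopen).1 haΩ
    have hdab : G.d a = G.d b := (hab.map htop.continuous_d).eq
    have hrab : G.r a = G.r b := (hab.map htop.continuous_r).eq
    have hab' : a = b := hinj a haΩ b hbΩ hdab hrab
    have hPQeq : P = Q := by
      have : e.symm P = e.symm Q := Subtype.ext (by rw [e.symm_apply_apply a']; exact hab')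
      have := e.symm.toEquiv.injective this
      exact this
    have : β = β * σ := by
      have := congrArg (fun w => (w.1 : Y × Γ).2) hPQeq
      exact this
    have hσ1 : σ = 1 := by
      have h' : β * σ = β * 1 := by rw [mul_one]; exact this.symm
      exact mul_left_cancel h'
    apply hp2q2
    have : p.2⁻¹ * q.2 = 1 := hσ1
    calc p.2 = p.2 * (p.2⁻¹ * q.2) := by rw [this, mul_one]
    _ = q.2 := by rw [← mul_assoc, mul_inv_cancel, one_mul]
  -- conclude: separate via the separation quotient of `Γ`
  haveI : IsTopologicalGroup (SeparationQuotient Γ) := ⟨⟩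
  have hmkne : SeparationQuotient.mk p.2 ≠ SeparationQuotient.mk q.2 := fun he =>
    hkey (SeparationQuotient.mk_eq_mk.1 he)
  obtain ⟨u, v, hu, hv, hpu, hqv, huv⟩ := t2_separation hmkne
  set O₁ : Set Γ := SeparationQuotient.mk ⁻¹' u with hO₁def
  set O₂ : Set Γ := SeparationQuotient.mk ⁻¹' v with hO₂def
  have hO₁open : IsOpen O₁ := hu.preimage SeparationQuotient.continuous_mk
  have hO₂open : IsOpen O₂ := hv.preimage SeparationQuotient.continuous_mk
  have hO₁₂ : Disjoint O₁ O₂ := huv.preimage _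
  set T₁ : Set {b // b ∈ (actionGroupoid ρ).res W} := (fun w => w.1.2) ⁻¹' O₁ with hT₁def
  set T₂ : Set {b // b ∈ (actionGroupoid ρ).res W} := (fun w => w.1.2) ⁻¹' O₂ with hT₂def
  have hT₁open : IsOpen T₁ :=
    hO₁open.preimage (continuous_snd.comp continuous_subtype_val)
  have hT₂open : IsOpen T₂ :=
    hO₂open.preimage (continuous_snd.comp continuous_subtype_val)
  refine ⟨Subtype.val '' (⇑e ⁻¹' T₁), Subtype.val '' (⇑e ⁻¹' T₂),
    hVopen'.isOpenMap_subtype_val _ ((hT₁open.preimage e.continuous)),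
    hVopen'.isOpenMap_subtype_val _ ((hT₂open.preimage e.continuous)),
    ⟨g', hpu, rfl⟩, ⟨h', hqv, rfl⟩, ?_⟩
  rw [Set.disjoint_left]
  rintro x ⟨w₁, hw₁, rfl⟩ ⟨w₂, hw₂, hval⟩
  have : w₂ = w₁ := Subtype.ext hval
  rw [this] at hw₂
  exact (Set.disjoint_left.1 hO₁₂) hw₁ hw₂
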